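/- Uniform-in-k double-limit convergence (Lemma 6). Assume the full context and the subsequence setting, and recall the corresponding scaling factors r_{n_j} (so r_{n_j} → ∞). Then for every t ∈ [0, T): as j → ∞, the quantities ‖∑_{i=m(T_{n_k})}^{m(T_{n_k}+t)−1} α(i)·H_{r_{n_j}}(x̂(t(i)), Y_{i+1}) − ∫_0^t h_{r_{n_j}}(x̂^lim(s)) ds‖ converge, uniformly in k, to ‖∑_{i=m(T_{n_k})}^{m(T_{n_k}+t)−1} α(i)·H_∞(x̂(t(i)), Y_{i+1}) − ∫_0^t h_∞(x̂^lim(s)) ds‖. -/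
import Mathlib


open Filter

theorem uniform_in_k_double_limit
    {E : Type*} [NormedAddCommGroup E] [NormedSpace ℝ E] [FiniteDimensional ℝ E]
    [Nontrivial E]
    {𝓨 : Type*}
    (α : ℕ → ℝ)
    (hα_pos : ∀ n, 0 < α n)
    (hα_anti : ∀ n, α (n + 1) ≤ α n)
    (hα_div : Tendsto (fun n => ∑ i ∈ Finset.range n, α i) atTop atTop)
    (hα_to0 : Tendsto α atTop (nhds 0))
    (Cα : ℝ) (hCα_pos : 0 < Cα)
    (hCα : ∀ n, α n - α (n + 1) ≤ Cα * α n ^ 2)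
    (t : ℕ → ℝ) (ht : ∀ n, t n = ∑ i ∈ Finset.range n, α i)
    (m : ℝ → ℕ)
    (hm_le : ∀ s : ℝ, 0 ≤ s → t (m s) ≤ s)
    (hm_max : ∀ s : ℝ, 0 ≤ s → ∀ i : ℕ, t i ≤ s → i ≤ m s)
    (hm_neg : ∀ s : ℝ, s < 0 → m s = 0)
    (T : ℝ) (hT : 0 < T)
    (Tseq : ℕ → ℝ) (hTseq0 : Tseq 0 = 0)
    (hTseq : ∀ n, Tseq (n + 1) = t (m (Tseq n + T) + 1))
    (Y : ℕ → 𝓨) (H : E → 𝓨 → E)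
    (x : ℕ → E)
    (hx : ∀ n, x (n + 1) = x n + α n • H (x n) (Y (n + 1)))
    (L : 𝓨 → ℝ) (hL_nonneg : ∀ y, 0 ≤ L y)
    (hH_lip : ∀ x₁ x₂ : E, ∀ y : 𝓨, ‖H x₁ y - H x₂ y‖ ≤ L y * ‖x₁ - x₂‖)
    (Hinf : E → 𝓨 → E) (κ : ℝ → ℝ) (hκ : Tendsto κ atTop (nhds 0))
    (b : E → 𝓨 → E) (Lb : 𝓨 → ℝ) (hLb_nonneg : ∀ y, 0 ≤ Lb y)
    (hHc : ∀ c : ℝ, 1 ≤ c → ∀ x' : E, ∀ y : 𝓨,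
      c⁻¹ • H (c • x') y - Hinf x' y = κ c • b x' y)
    (hb_lip : ∀ x₁ x₂ : E, ∀ y : 𝓨, ‖b x₁ y - b x₂ y‖ ≤ Lb y * ‖x₁ - x₂‖)
    (hHinf_lip : ∀ x₁ x₂ : E, ∀ y : 𝓨, ‖Hinf x₁ y - Hinf x₂ y‖ ≤ L y * ‖x₁ - x₂‖)
    (h : E → E) (Lbar : ℝ) (hLbar : 0 ≤ Lbar)
    (Lbbar : ℝ) (hLbbar : 0 ≤ Lbbar)
    (hrateH : ∀ τ : ℝ, 0 < τ → ∀ x' : E, ∀ ε : ℝ, 0 < ε → ∃ N : ℕ, ∀ n ≥ N,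
      ∀ t₁ t₂ : ℝ, -τ ≤ t₁ → t₁ ≤ t₂ → t₂ ≤ τ →
        ‖∑ i ∈ Finset.Ico (m (t n + t₁)) (m (t n + t₂)),
            α i • (H x' (Y (i + 1)) - h x')‖ ≤ ε)
    (hrateLb : ∀ τ : ℝ, 0 < τ → ∀ ε : ℝ, 0 < ε → ∃ N : ℕ, ∀ n ≥ N,
      ∀ t₁ t₂ : ℝ, -τ ≤ t₁ → t₁ ≤ t₂ → t₂ ≤ τ →
        |∑ i ∈ Finset.Ico (m (t n + t₁)) (m (t n + t₂)),
            α i * (Lb (Y (i + 1)) - Lbbar)| ≤ ε)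
    (hrateL : ∀ τ : ℝ, 0 < τ → ∀ ε : ℝ, 0 < ε → ∃ N : ℕ, ∀ n ≥ N,
      ∀ t₁ t₂ : ℝ, -τ ≤ t₁ → t₁ ≤ t₂ → t₂ ≤ τ →
        |∑ i ∈ Finset.Ico (m (t n + t₁)) (m (t n + t₂)),
            α i * (L (Y (i + 1)) - Lbar)| ≤ ε)
    (hh_lip : ∀ x₁ x₂ : E, ‖h x₁ - h x₂‖ ≤ Lbar * ‖x₁ - x₂‖)
    (hinf : E → E)
    (hhinf_lip : ∀ x₁ x₂ : E, ‖hinf x₁ - hinf x₂‖ ≤ Lbar * ‖x₁ - x₂‖)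
    (hunif : ∀ K : Set E, IsCompact K →
      TendstoUniformlyOn (fun (c : ℝ) (x' : E) => c⁻¹ • h (c • x')) hinf atTop K)
    (r : ℕ → ℝ) (hr : ∀ n, r n = max 1 ‖x (m (Tseq n))‖)
    (nk : ℕ → ℕ) (hnk_mono : StrictMono nk)
    (hnk_div : Tendsto (fun k => r (nk k)) atTop atTop)
    (xlim : ℝ → E) (hxlim_cont : ContinuousOn xlim (Set.Ico 0 T))
    (hxlim : TendstoUniformlyOn (fun (k : ℕ) (s : ℝ) => (r (nk k))⁻¹ • x (m (Tseq (nk k) + s)))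
      xlim atTop (Set.Ico 0 T))
 :
    ∀ s : ℝ, 0 ≤ s → s < T → ∀ ε : ℝ, 0 < ε → ∃ J : ℕ, ∀ j ≥ J, ∀ k : ℕ,
      |‖(∑ i ∈ Finset.Ico (m (Tseq (nk k))) (m (Tseq (nk k) + s)),
            α i • ((r (nk j))⁻¹ • H (r (nk j) • ((r (nk k))⁻¹ • x i)) (Y (i + 1)))) -
          ∫ u in (0:ℝ)..s, (r (nk j))⁻¹ • h (r (nk j) • xlim u)‖ -
        ‖(∑ i ∈ Finset.Ico (m (Tseq (nk k))) (m (Tseq (nk k) + s)),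
            α i • Hinf ((r (nk k))⁻¹ • x i) (Y (i + 1))) -
          ∫ u in (0:ℝ)..s, hinf (xlim u)‖| ≤ ε := by
  intro s hs0 hsT ε hε
  -- basic facts
  have hα0 : ∀ n, 0 ≤ α n := fun n => (hα_pos n).le
  have ht_mono : StrictMono t := strictMono_nat_of_lt_succ (fun n => by
    rw [ht, ht, Finset.sum_range_succ]; linarith [hα_pos n])
  have ht0 : t 0 = 0 := by rw [ht]; simp
  have ht_nonneg : ∀ n, 0 ≤ t n := fun n => by
    rw [ht]; exact Finset.sum_nonneg fun i _ => hα0 i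
  have hm_mono : ∀ s₁ s₂ : ℝ, 0 ≤ s₁ → s₁ ≤ s₂ → m s₁ ≤ m s₂ := fun s₁ s₂ h0 h12 =>
    hm_max s₂ (h0.trans h12) (m s₁) ((hm_le s₁ h0).trans h12)
  have hmt : ∀ i, m (t i) = i := fun i =>
    le_antisymm (ht_mono.le_iff_le.mp (hm_le (t i) (ht_nonneg i)))
      (hm_max (t i) (ht_nonneg i) i le_rfl)
  have hTq : ∀ n, ∃ q, Tseq n = t q ∧ n ≤ q := by
    intro n
    induction n with
    | zero => exact ⟨0, by rw [hTseq0, ht0], le_rfl⟩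
    | succ n ih =>
      obtain ⟨q, hq, hnq⟩ := ih
      refine ⟨m (Tseq n + T) + 1, hTseq n, ?_⟩
      have h0 : 0 ≤ Tseq n := hq ▸ ht_nonneg q
      have h1 : q ≤ m (Tseq n + T) := hm_max _ (by linarith) q (by rw [← hq]; linarith)
      omega
  have hr1 : ∀ n, 1 ≤ r n := fun n => by rw [hr n]; exact le_max_left _ _
  have hTnonneg : ∀ n, 0 ≤ Tseq n := fun n => by
    obtain ⟨q, hq, _⟩ := hTq n; rw [hq]; exact ht_nonneg q
  have hta : ∀ k : ℕ, t (m (Tseq (nk k))) = Tseq (nk k) := fun k => by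
    obtain ⟨q, hq, _⟩ := hTq (nk k); rw [hq, hmt]
  have hab : ∀ k : ℕ, m (Tseq (nk k)) ≤ m (Tseq (nk k) + s) := fun k =>
    hm_mono _ _ (hTnonneg _) (by linarith)
  have hαS : ∀ k : ℕ, ∑ i ∈ Finset.Ico (m (Tseq (nk k))) (m (Tseq (nk k) + s)), α i ≤ s := by
    intro k
    rw [show (∑ i ∈ Finset.Ico (m (Tseq (nk k))) (m (Tseq (nk k) + s)), α i)
        = t (m (Tseq (nk k) + s)) - t (m (Tseq (nk k))) from by
      rw [ht, ht]; exact Finset.sum_Ico_eq_sub _ (hab k)]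
    rw [hta k]
    have := hm_le (Tseq (nk k) + s) (by linarith [hTnonneg (nk k)])
    linarith
  have hαS0 : ∀ k : ℕ, 0 ≤ ∑ i ∈ Finset.Ico (m (Tseq (nk k))) (m (Tseq (nk k) + s)), α i :=
    fun k => Finset.sum_nonneg fun i _ => hα0 i
  -- membership facts
  have hmem : ∀ k : ℕ, ∀ i ∈ Finset.Ico (m (Tseq (nk k))) (m (Tseq (nk k) + s)),
      0 ≤ t i - Tseq (nk k) ∧ t i - Tseq (nk k) < s ∧
        m (Tseq (nk k) + (t i - Tseq (nk k))) = i := by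
    intro k i hi
    rw [Finset.mem_Ico] at hi
    have h1 : Tseq (nk k) ≤ t i := by
      have := ht_mono.monotone hi.1
      rwa [hta k] at this
    have h2 : t i < t (m (Tseq (nk k) + s)) := ht_mono hi.2
    have h3 : t (m (Tseq (nk k) + s)) ≤ Tseq (nk k) + s :=
      hm_le _ (by linarith [hTnonneg (nk k)])
    refine ⟨by linarith, by linarith, ?_⟩
    rw [show Tseq (nk k) + (t i - Tseq (nk k)) = t i from by ring, hmt]
  -- bound on xlim on [0,s]
  have hIccsub : Set.Icc (0:ℝ) s ⊆ Set.Ico 0 T := fun u hu => ⟨hu.1, lt_of_le_of_lt hu.2 hsT⟩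
  have hxc : ContinuousOn xlim (Set.Icc 0 s) := hxlim_cont.mono hIccsub
  obtain ⟨M0, hM0⟩ := isCompact_Icc.exists_bound_of_continuousOn hxc
  have hM00 : 0 ≤ M0 := le_trans (norm_nonneg _) (hM0 0 ⟨le_rfl, hs0⟩)
  -- uniform convergence: eventual bound on scaled iterates
  obtain ⟨K₀, hK₀⟩ := eventually_atTop.mp (Metric.tendstoUniformlyOn_iff.mp hxlim 1 one_pos)
  have hxhat : ∀ k : ℕ, K₀ ≤ k → ∀ i ∈ Finset.Ico (m (Tseq (nk k))) (m (Tseq (nk k) + s)),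
      ‖(r (nk k))⁻¹ • x i‖ ≤ M0 + 1 := by
    intro k hk i hi
    obtain ⟨hu0, hus, hmi⟩ := hmem k i hi
    have hd := hK₀ k hk (t i - Tseq (nk k)) ⟨hu0, by linarith⟩
    rw [hmi] at hd
    have h5 : ‖(r (nk k))⁻¹ • x i - xlim (t i - Tseq (nk k))‖ < 1 := by
      rw [← dist_eq_norm, dist_comm]; exact hd
    have h6 : ‖xlim (t i - Tseq (nk k))‖ ≤ M0 := hM0 _ ⟨hu0, hus.le⟩
    have h7 : xlim (t i - Tseq (nk k)) + ((r (nk k))⁻¹ • x i - xlim (t i - Tseq (nk k)))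
        = (r (nk k))⁻¹ • x i := by abel
    calc ‖(r (nk k))⁻¹ • x i‖
        = ‖xlim (t i - Tseq (nk k)) + ((r (nk k))⁻¹ • x i - xlim (t i - Tseq (nk k)))‖ := by
          rw [h7]
      _ ≤ ‖xlim (t i - Tseq (nk k))‖ + ‖(r (nk k))⁻¹ • x i - xlim (t i - Tseq (nk k))‖ :=
          norm_add_le _ _
      _ ≤ M0 + 1 := by linarith
  -- Lb sum bound
  obtain ⟨N₁, hN₁⟩ := hrateLb T hT 1 one_pos
  have hLbS : ∀ k : ℕ, N₁ ≤ k →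
      ∑ i ∈ Finset.Ico (m (Tseq (nk k))) (m (Tseq (nk k) + s)), α i * Lb (Y (i+1))
        ≤ 1 + Lbbar * s := by
    intro k hk
    obtain ⟨q, hq, hqk⟩ := hTq (nk k)
    have h1 := hN₁ q (le_trans hk (le_trans hnk_mono.le_apply hqk)) 0 s (by linarith) hs0 hsT.le
    rw [add_zero, ← hq] at h1
    have h2 : ∑ i ∈ Finset.Ico (m (Tseq (nk k))) (m (Tseq (nk k) + s)),
        α i * (Lb (Y (i+1)) - Lbbar) ≤ 1 := le_trans (le_abs_self _) h1
    have h4 : ∑ i ∈ Finset.Ico (m (Tseq (nk k))) (m (Tseq (nk k) + s)), α i * Lb (Y (i+1)) =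
        (∑ i ∈ Finset.Ico (m (Tseq (nk k))) (m (Tseq (nk k) + s)), α i * (Lb (Y (i+1)) - Lbbar))
          + Lbbar * ∑ i ∈ Finset.Ico (m (Tseq (nk k))) (m (Tseq (nk k) + s)), α i := by
      rw [Finset.mul_sum, ← Finset.sum_add_distrib]
      exact Finset.sum_congr rfl fun i _ => by ring
    have h5 := mul_le_mul_of_nonneg_left (hαS k) hLbbar
    linarith [h4 ▸ (add_le_add h2 h5)]
  -- H(0,·) sum bound
  obtain ⟨N₂, hN₂⟩ := hrateH T hT 0 1 one_pos
  have hH0S : ∀ k : ℕ, N₂ ≤ k →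
      ‖∑ i ∈ Finset.Ico (m (Tseq (nk k))) (m (Tseq (nk k) + s)), α i • H 0 (Y (i+1))‖
        ≤ 1 + s * ‖h 0‖ := by
    intro k hk
    obtain ⟨q, hq, hqk⟩ := hTq (nk k)
    have h1 := hN₂ q (le_trans hk (le_trans hnk_mono.le_apply hqk)) 0 s (by linarith) hs0 hsT.le
    rw [add_zero, ← hq] at h1
    have h4 : ∑ i ∈ Finset.Ico (m (Tseq (nk k))) (m (Tseq (nk k) + s)), α i • H 0 (Y (i+1)) =
        (∑ i ∈ Finset.Ico (m (Tseq (nk k))) (m (Tseq (nk k) + s)),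
            α i • (H 0 (Y (i+1)) - h 0))
          + (∑ i ∈ Finset.Ico (m (Tseq (nk k))) (m (Tseq (nk k) + s)), α i) • h 0 := by
      rw [Finset.sum_smul, ← Finset.sum_add_distrib]
      refine Finset.sum_congr rfl fun i _ => ?_
      rw [smul_sub]; abel
    rw [h4]
    refine le_trans (norm_add_le _ _) ?_
    have h5 : ‖(∑ i ∈ Finset.Ico (m (Tseq (nk k))) (m (Tseq (nk k) + s)), α i) • h 0‖
        = (∑ i ∈ Finset.Ico (m (Tseq (nk k))) (m (Tseq (nk k) + s)), α i) * ‖h 0‖ := by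
      rw [norm_smul, Real.norm_of_nonneg (hαS0 k)]
    rw [h5]
    have := mul_le_mul_of_nonneg_right (hαS k) (norm_nonneg (h 0))
    linarith
  -- key identity: difference of sums equals κ • (b-sum)
  have hAB : ∀ j k : ℕ,
      (∑ i ∈ Finset.Ico (m (Tseq (nk k))) (m (Tseq (nk k) + s)),
          α i • ((r (nk j))⁻¹ • H (r (nk j) • ((r (nk k))⁻¹ • x i)) (Y (i + 1)))) -
      (∑ i ∈ Finset.Ico (m (Tseq (nk k))) (m (Tseq (nk k) + s)),
          α i • Hinf ((r (nk k))⁻¹ • x i) (Y (i + 1)))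
      = κ (r (nk j)) • ∑ i ∈ Finset.Ico (m (Tseq (nk k))) (m (Tseq (nk k) + s)),
          α i • b ((r (nk k))⁻¹ • x i) (Y (i+1)) := by
    intro j k
    rw [← Finset.sum_sub_distrib, Finset.smul_sum]
    refine Finset.sum_congr rfl fun i _ => ?_
    rw [← smul_sub, hHc (r (nk j)) (hr1 _) _ _, smul_comm]
  -- uniform bound on the sum-difference
  have hCex : ∃ C : ℝ, 0 ≤ C ∧ ∀ j k : ℕ,
      ‖(∑ i ∈ Finset.Ico (m (Tseq (nk k))) (m (Tseq (nk k) + s)),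
          α i • ((r (nk j))⁻¹ • H (r (nk j) • ((r (nk k))⁻¹ • x i)) (Y (i + 1)))) -
        (∑ i ∈ Finset.Ico (m (Tseq (nk k))) (m (Tseq (nk k) + s)),
          α i • Hinf ((r (nk k))⁻¹ • x i) (Y (i + 1)))‖
        ≤ |κ (r (nk j))| * C := by
    by_cases hcase : ∃ c₁ : ℝ, 1 ≤ c₁ ∧ κ c₁ ≠ 0
    · obtain ⟨c₁, hc₁1, hc₁⟩ := hcase
      have habs : Tendsto (fun c => |κ c|) atTop (nhds 0) := by simpa using hκ.abs
      obtain ⟨a, ha⟩ := eventually_atTop.mp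
        (habs.eventually_lt_const (abs_pos.mpr hc₁))
      have hc₀1 : (1:ℝ) ≤ max a 1 := le_max_right _ _
      have hne : κ (max a 1) - κ c₁ ≠ 0 := by
        have hlt := ha (max a 1) (le_max_left _ _)
        intro hcontra
        rw [sub_eq_zero] at hcontra
        rw [hcontra] at hlt
        exact lt_irrefl _ hlt
      set lam := (κ (max a 1) - κ c₁)⁻¹ * ((max a 1)⁻¹ - c₁⁻¹) with hlam
      have hb0 : ∀ y, b 0 y = lam • H 0 y := by
        intro y
        have e0 := hHc (max a 1) hc₀1 0 y
        have e1 := hHc c₁ hc₁1 0 y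
        rw [smul_zero] at e0 e1
        have e2 : ((max a 1)⁻¹ - c₁⁻¹) • H 0 y = (κ (max a 1) - κ c₁) • b 0 y := by
          rw [sub_smul, sub_smul, ← e0, ← e1]; abel
        rw [hlam, ← smul_smul, e2, inv_smul_smul₀ hne]
      -- eventual bound on the b-sum
      have hgev : ∀ k : ℕ, max K₀ (max N₁ N₂) ≤ k →
          ‖∑ i ∈ Finset.Ico (m (Tseq (nk k))) (m (Tseq (nk k) + s)),
              α i • b ((r (nk k))⁻¹ • x i) (Y (i+1))‖
            ≤ (M0 + 1) * (1 + Lbbar * s) + |lam| * (1 + s * ‖h 0‖) := by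
        intro k hk
        have hk0 : K₀ ≤ k := le_trans (le_max_left _ _) hk
        have hk1 : N₁ ≤ k := le_trans (le_trans (le_max_left _ _) (le_max_right _ _)) hk
        have hk2 : N₂ ≤ k := le_trans (le_trans (le_max_right _ _) (le_max_right _ _)) hk
        have hdecomp : ∑ i ∈ Finset.Ico (m (Tseq (nk k))) (m (Tseq (nk k) + s)),
            α i • b ((r (nk k))⁻¹ • x i) (Y (i+1)) =
            (∑ i ∈ Finset.Ico (m (Tseq (nk k))) (m (Tseq (nk k) + s)),
                α i • (b ((r (nk k))⁻¹ • x i) (Y (i+1)) - b 0 (Y (i+1))))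
              + lam • ∑ i ∈ Finset.Ico (m (Tseq (nk k))) (m (Tseq (nk k) + s)),
                  α i • H 0 (Y (i+1)) := by
          rw [Finset.smul_sum, ← Finset.sum_add_distrib]
          refine Finset.sum_congr rfl fun i _ => ?_
          rw [smul_sub, smul_comm lam, ← hb0]
          abel
        rw [hdecomp]
        refine le_trans (norm_add_le _ _) (add_le_add ?_ ?_)
        · refine le_trans (norm_sum_le _ _) ?_
          have hterm : ∀ i ∈ Finset.Ico (m (Tseq (nk k))) (m (Tseq (nk k) + s)),
              ‖α i • (b ((r (nk k))⁻¹ • x i) (Y (i+1)) - b 0 (Y (i+1)))‖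
                ≤ (M0+1) * (α i * Lb (Y (i+1))) := by
            intro i hi
            rw [norm_smul, Real.norm_of_nonneg (hα0 i)]
            have hb := hb_lip ((r (nk k))⁻¹ • x i) 0 (Y (i+1))
            rw [sub_zero] at hb
            have hx' := hxhat k hk0 i hi
            calc α i * ‖b ((r (nk k))⁻¹ • x i) (Y (i+1)) - b 0 (Y (i+1))‖
                ≤ α i * (Lb (Y (i+1)) * (M0+1)) := by
                  refine mul_le_mul_of_nonneg_left ?_ (hα0 i)
                  exact le_trans hb (mul_le_mul_of_nonneg_left hx' (hLb_nonneg _))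
              _ = (M0+1) * (α i * Lb (Y (i+1))) := by ring
          refine le_trans (Finset.sum_le_sum hterm) ?_
          rw [← Finset.mul_sum]
          exact mul_le_mul_of_nonneg_left (hLbS k hk1) (by linarith)
        · rw [norm_smul, Real.norm_eq_abs]
          exact mul_le_mul_of_nonneg_left (hH0S k hk2) (abs_nonneg _)
      -- upgrade eventual bound to a global bound
      have hCg : 0 ≤ (M0 + 1) * (1 + Lbbar * s) + |lam| * (1 + s * ‖h 0‖) := by
        have h1 : 0 ≤ Lbbar * s := mul_nonneg hLbbar hs0
        have h2 : 0 ≤ s * ‖h 0‖ := mul_nonneg hs0 (norm_nonneg _)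
        have h3 : 0 ≤ (M0 + 1) * (1 + Lbbar * s) := mul_nonneg (by linarith) (by linarith)
        have h4 : 0 ≤ |lam| * (1 + s * ‖h 0‖) := mul_nonneg (abs_nonneg _) (by linarith)
        linarith
      set g : ℕ → ℝ := fun k =>
        ‖∑ i ∈ Finset.Ico (m (Tseq (nk k))) (m (Tseq (nk k) + s)),
            α i • b ((r (nk k))⁻¹ • x i) (Y (i+1))‖ with hg
      have hglob : ∀ k : ℕ, g k ≤ ((M0 + 1) * (1 + Lbbar * s) + |lam| * (1 + s * ‖h 0‖))
          + ∑ i ∈ Finset.range (max K₀ (max N₁ N₂)), g i := by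
        intro k
        have hsumg : 0 ≤ ∑ i ∈ Finset.range (max K₀ (max N₁ N₂)), g i :=
          Finset.sum_nonneg fun i _ => norm_nonneg _
        rcases le_or_gt (max K₀ (max N₁ N₂)) k with hk | hk
        · linarith [hgev k hk]
        · have := Finset.single_le_sum
            (fun i (_ : i ∈ Finset.range (max K₀ (max N₁ N₂))) => norm_nonneg
              (∑ i' ∈ Finset.Ico (m (Tseq (nk i))) (m (Tseq (nk i) + s)),
                α i' • b ((r (nk i))⁻¹ • x i') (Y (i'+1))))
            (Finset.mem_range.mpr hk)
          linarith [this]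
      refine ⟨((M0 + 1) * (1 + Lbbar * s) + |lam| * (1 + s * ‖h 0‖))
          + ∑ i ∈ Finset.range (max K₀ (max N₁ N₂)), g i, ?_, ?_⟩
      · have hsumg : 0 ≤ ∑ i ∈ Finset.range (max K₀ (max N₁ N₂)), g i :=
          Finset.sum_nonneg fun i _ => norm_nonneg _
        linarith
      · intro j k
        rw [hAB j k, norm_smul, Real.norm_eq_abs]
        exact mul_le_mul_of_nonneg_left (hglob k) (abs_nonneg _)
    · push_neg at hcase
      refine ⟨0, le_rfl, fun j k => ?_⟩
      rw [hAB j k, hcase _ (hr1 _), zero_smul, norm_zero, mul_zero]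
  obtain ⟨C, hC0, hCb⟩ := hCex
  -- choose J₁ to kill the κ factor
  have hκj : Tendsto (fun j => |κ (r (nk j))|) atTop (nhds 0) := by
    have := (hκ.comp hnk_div).abs
    simpa using this
  obtain ⟨J₁, hJ₁⟩ := eventually_atTop.mp
    (hκj.eventually_lt_const (show (0:ℝ) < ε/(2*(C+1)) by positivity))
  -- integral part
  have hLiph : Continuous h := by
    have : LipschitzWith (Real.toNNReal Lbar) h := by
      apply LipschitzWith.of_dist_le_mul
      intro x₁ x₂
      rw [dist_eq_norm, dist_eq_norm, Real.coe_toNNReal Lbar hLbar]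
      exact hh_lip x₁ x₂
    exact this.continuous
  have hLiphinf : Continuous hinf := by
    have : LipschitzWith (Real.toNNReal Lbar) hinf := by
      apply LipschitzWith.of_dist_le_mul
      intro x₁ x₂
      rw [dist_eq_norm, dist_eq_norm, Real.coe_toNNReal Lbar hLbar]
      exact hhinf_lip x₁ x₂
    exact this.continuous
  have hK : IsCompact (xlim '' Set.Icc 0 s) := isCompact_Icc.image_of_continuousOn hxc
  obtain ⟨J₂, hJ₂⟩ := eventually_atTop.mp (hnk_div.eventually
    (Metric.tendstoUniformlyOn_iff.mp (hunif _ hK) (ε/(2*(s+1))) (by positivity)))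
  have hint : ∀ j : ℕ, J₂ ≤ j →
      ‖(∫ u in (0:ℝ)..s, (r (nk j))⁻¹ • h (r (nk j) • xlim u)) -
        ∫ u in (0:ℝ)..s, hinf (xlim u)‖ ≤ ε/2 := by
    intro j hj
    have hIntF : IntervalIntegrable (fun u => (r (nk j))⁻¹ • h (r (nk j) • xlim u))
        MeasureTheory.volume 0 s := by
      apply ContinuousOn.intervalIntegrable
      rw [Set.uIcc_of_le hs0]
      exact (hLiph.comp_continuousOn (hxc.const_smul _)).const_smul _
    have hIntG : IntervalIntegrable (fun u => hinf (xlim u)) MeasureTheory.volume 0 s := by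
      apply ContinuousOn.intervalIntegrable
      rw [Set.uIcc_of_le hs0]
      exact hLiphinf.comp_continuousOn hxc
    rw [← intervalIntegral.integral_sub hIntF hIntG]
    have hnormle : ∀ u ∈ Set.uIoc (0:ℝ) s,
        ‖(r (nk j))⁻¹ • h (r (nk j) • xlim u) - hinf (xlim u)‖ ≤ ε/(2*(s+1)) := by
      intro u hu
      rw [Set.uIoc_of_le hs0] at hu
      have hd := hJ₂ j hj (xlim u) ⟨u, ⟨hu.1.le, hu.2⟩, rfl⟩
      rw [dist_comm, dist_eq_norm] at hd
      exact hd.le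
    have hb := intervalIntegral.norm_integral_le_of_norm_le_const hnormle
    rw [sub_zero, abs_of_nonneg hs0] at hb
    have h1 : ε/(2*(s+1)) * s ≤ ε/2 := by
      rw [div_mul_eq_mul_div, div_le_div_iff₀ (by positivity) (by norm_num)]
      nlinarith
    linarith
  -- conclusion
  have key : ∀ (A B IF IG : E), ‖A - B‖ ≤ ε/2 → ‖IF - IG‖ ≤ ε/2 →
      |‖A - IF‖ - ‖B - IG‖| ≤ ε := by
    intro A B IF IG h1 h2
    have h3 := abs_norm_sub_norm_le (A - IF) (B - IG)
    have h4 : (A - IF) - (B - IG) = (A - B) - (IF - IG) := by abel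
    rw [h4] at h3
    have h5 := norm_sub_le (A - B) (IF - IG)
    linarith
  refine ⟨max J₁ J₂, fun j hj k => ?_⟩
  refine key _ _ _ _ ?_ (hint j (le_trans (le_max_right _ _) hj))
  have hlt := hJ₁ j (le_trans (le_max_left _ _) hj)
  have hlt' : |κ (r (nk j))| * (2*(C+1)) < ε :=
    (lt_div_iff₀ (by positivity)).mp hlt
  have h6 : |κ (r (nk j))| * C ≤ ε/2 := by
    nlinarith [abs_nonneg (κ (r (nk j)))]
  exact le_trans (hCb j k) h6
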